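/- Let L : A ⥤ 𝓛 be a bijective-on-objects functor between categories and let C be a category with coequalizers. Then the precomposition functor L* : [𝓛, C] → [A, C], F ↦ L ⋙ F, is monadic if and only if it has a left adjoint. -/

import Mathlib

open CategoryTheory CategoryTheory.Limits

universe v₁ u₁ v₂ u₂ v₃ u₃ v u

namespace MyMonadicity

open CategoryTheory Limits Monad

noncomputable section

namespace Internal

variable {C : Type u₁} {D : Type u₂}
variable [Category.{v₁} C] [Category.{v} D]
variable {G : D ⥤ C} {F : C ⥤ D} (adj : F ⊣ G)
/-- The "main pair" for an algebra `(A, α)` is the pair of morphisms `(F α, ε_FA)`. It is always a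
reflexive pair, and will be used to construct the left adjoint to the comparison functor and show it
is an equivalence.
-/
instance main_pair_reflexive (A : adj.toMonad.Algebra) :
    IsReflexivePair (F.map A.a) (adj.counit.app (F.obj A.A)) := by
  apply IsReflexivePair.mk' (F.map (adj.unit.app _)) _ _
  · exact (F.map_comp _ _).symm.trans ((congr_arg F.map A.unit).trans (F.map_id _))
  · exact adj.left_triangle_components A.A

/-- The "main pair" for an algebra `(A, α)` is the pair of morphisms `(F α, ε_FA)`. It is always a
`G`-split pair, and will be used to construct the left adjoint to the comparison functor and show it
is an equivalence.
-/
instance main_pair_G_split (A : adj.toMonad.Algebra) :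
    G.IsSplitPair (F.map A.a)
      (adj.counit.app (F.obj A.A)) where
  splittable := ⟨_, _, ⟨beckSplitCoequalizer A⟩⟩

/-- The object function for the left adjoint to the comparison functor. -/
def comparisonLeftAdjointObj (A : adj.toMonad.Algebra)
    [HasCoequalizer (F.map A.a) (adj.counit.app _)] : D :=
  coequalizer (F.map A.a) (adj.counit.app _)

/-
The new unused variable linter in
https://github.com/leanprover/lean4/pull/5338
flags `{ f : F.obj A.A ⟶ B // _ }`.
-/
set_option linter.unusedVariables false in
/--
We have a bijection of homsets which will be used to construct the left adjoint to the comparison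
functor.
-/
@[simps!]
def comparisonLeftAdjointHomEquiv (A : adj.toMonad.Algebra) (B : D)
    [HasCoequalizer (F.map A.a) (adj.counit.app (F.obj A.A))] :
    (comparisonLeftAdjointObj adj A ⟶ B) ≃ (A ⟶ (comparison adj).obj B) :=
  calc
    (comparisonLeftAdjointObj adj A ⟶ B) ≃ { f : F.obj A.A ⟶ B // _ } :=
      Cofork.IsColimit.homIso (colimit.isColimit _) B
    _ ≃ { g : A.A ⟶ G.obj B // G.map (F.map g) ≫ G.map (adj.counit.app B) = A.a ≫ g } := by
      refine (adj.homEquiv _ _).subtypeEquiv ?_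
      intro f
      rw [← (adj.homEquiv _ _).injective.eq_iff, Adjunction.homEquiv_naturality_left,
        adj.homEquiv_unit, adj.homEquiv_unit]
      erw [G.map_comp]
      dsimp
      erw [adj.right_triangle_components_assoc, ← G.map_comp, F.map_comp, Category.assoc,
        adj.counit_naturality, adj.left_triangle_components_assoc]
      apply eq_comm
    _ ≃ (A ⟶ (comparison adj).obj B) :=
      { toFun := fun g =>
          { f := _
            h := g.prop }
        invFun := fun f => ⟨f.f, f.h⟩
        left_inv := fun g => by ext; rfl
        right_inv := fun f => by ext; rfl }

/-- Construct the adjunction to the comparison functor.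
-/
def leftAdjointComparison
    [∀ A : adj.toMonad.Algebra, HasCoequalizer (F.map A.a)
      (adj.counit.app (F.obj A.A))] :
    adj.toMonad.Algebra ⥤ D := by
  refine
    Adjunction.leftAdjointOfEquiv (G := comparison adj)
      (F_obj := fun A => comparisonLeftAdjointObj adj A) (fun A B => ?_) ?_
  · apply comparisonLeftAdjointHomEquiv
  · intro A B B' g h
    ext1
    -- Porting note: the goal was previously closed by the following, which succeeds until
    -- `Category.assoc`.
    -- dsimp [comparisonLeftAdjointHomEquiv]
    -- rw [← adj.homEquiv_naturality_right, Category.assoc]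
    exact (congrArg _ (Category.assoc _ _ _).symm).trans (adj.homEquiv_naturality_right _ _)

/-- Provided we have the appropriate coequalizers, we have an adjunction to the comparison functor.
-/
@[simps! counit]
def comparisonAdjunction
    [∀ A : adj.toMonad.Algebra, HasCoequalizer (F.map A.a)
      (adj.counit.app (F.obj A.A))] :
    leftAdjointComparison adj ⊣ comparison adj :=
  Adjunction.adjunctionOfEquivLeft _ _

variable {adj}

theorem comparisonAdjunction_unit_f_aux
    [∀ A : adj.toMonad.Algebra, HasCoequalizer (F.map A.a)
      (adj.counit.app (F.obj A.A))]
    (A : adj.toMonad.Algebra) :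
    ((comparisonAdjunction adj).unit.app A).f =
      adj.homEquiv A.A _
        (coequalizer.π (F.map A.a) (adj.counit.app (F.obj A.A))) :=
  congr_arg (adj.homEquiv _ _) (Category.comp_id _)

/-- This is a cofork which is helpful for establishing monadicity: the morphism from the Beck
coequalizer to this cofork is the unit for the adjunction on the comparison functor.
-/
@[simps! pt]
def unitCofork (A : adj.toMonad.Algebra)
    [HasCoequalizer (F.map A.a) (adj.counit.app (F.obj A.A))] :
    Cofork (G.map (F.map A.a)) (G.map (adj.counit.app (F.obj A.A))) :=
  Cofork.ofπ (G.map (coequalizer.π (F.map A.a) (adj.counit.app (F.obj A.A))))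
    (by
      change _ = G.map _ ≫ _
      exact (G.map_comp _ _).symm.trans ((congr_arg G.map (coequalizer.condition (F.map A.a) (adj.counit.app (F.obj A.A)))).trans (G.map_comp _ _)))

@[simp]
theorem unitCofork_π (A : adj.toMonad.Algebra)
    [HasCoequalizer (F.map A.a) (adj.counit.app (F.obj A.A))] :
    (unitCofork A).π = G.map (coequalizer.π (F.map A.a) (adj.counit.app (F.obj A.A))) :=
  rfl

theorem comparisonAdjunction_unit_f
    [∀ A : adj.toMonad.Algebra, HasCoequalizer (F.map A.a)
      (adj.counit.app (F.obj A.A))]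
    (A : adj.toMonad.Algebra) :
    ((comparisonAdjunction adj).unit.app A).f = (beckCoequalizer A).desc (unitCofork A) := by
  apply Limits.Cofork.IsColimit.hom_ext (beckCoequalizer A)
  erw [Cofork.IsColimit.π_desc]
  dsimp only [beckCofork_π, unitCofork_π]
  erw [comparisonAdjunction_unit_f_aux, ← adj.homEquiv_naturality_left A.a, coequalizer.condition,
    adj.homEquiv_naturality_right, adj.homEquiv_unit, Category.assoc]
  apply adj.right_triangle_components_assoc

variable (adj)

/-- The cofork which describes the counit of the adjunction: the morphism from the coequalizer of
this pair to this morphism is the counit.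
-/
@[simps!]
def counitCofork (B : D) :
    Cofork (F.map (G.map (adj.counit.app B)))
      (adj.counit.app (F.obj (G.obj B))) :=
  Cofork.ofπ (adj.counit.app B) (adj.counit_naturality _)

variable {adj} in
/-- The unit cofork is a colimit provided `G` preserves it. -/
def unitColimitOfPreservesCoequalizer (A : adj.toMonad.Algebra)
    [HasCoequalizer (F.map A.a) (adj.counit.app (F.obj A.A))]
    [PreservesColimit (parallelPair (F.map A.a) (adj.counit.app (F.obj A.A))) G] :
    IsColimit (unitCofork (G := G) A) :=
  isColimitOfHasCoequalizerOfPreservesColimit G _ _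

/-- The counit cofork is a colimit provided `G` reflects it. -/
def counitCoequalizerOfReflectsCoequalizer (B : D)
    [ReflectsColimit (parallelPair (F.map (G.map (adj.counit.app B)))
      (adj.counit.app (F.obj (G.obj B)))) G] :
    IsColimit (counitCofork (adj := adj) B) :=
  isColimitOfIsColimitCoforkMap G _ (beckCoequalizer ((comparison adj).obj B))

-- Porting note: Lean 3 didn't seem to need this
instance
    [∀ A : adj.toMonad.Algebra, HasCoequalizer (F.map A.a) (adj.counit.app (F.obj A.A))]
    (B : D) : HasColimit (parallelPair
      (F.map (G.map (NatTrans.app adj.counit B)))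
      (NatTrans.app adj.counit (F.obj (G.obj B)))) :=
  inferInstanceAs <| HasCoequalizer
    (F.map ((comparison adj).obj B).a)
    (adj.counit.app (F.obj ((comparison adj).obj B).A))

theorem comparisonAdjunction_counit_app
    [∀ A : adj.toMonad.Algebra, HasCoequalizer (F.map A.a) (adj.counit.app (F.obj A.A))] (B : D) :
    (comparisonAdjunction adj).counit.app B = colimit.desc _ (counitCofork adj B) := by
  apply coequalizer.hom_ext
  change
    coequalizer.π (F.map ((comparison adj).obj B).a) (adj.counit.app (F.obj ((comparison adj).obj B).A)) ≫ coequalizer.desc ((adj.homEquiv _ B).symm (𝟙 _)) _ =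
      coequalizer.π _ _ ≫ coequalizer.desc _ _
  simp [Adjunction.homEquiv_counit]
  exact (adj.homEquiv_counit _ _ _).trans (by erw [F.map_id, Category.id_comp]; rfl)


end Internal

open Internal Adjunction Monad

variable {C : Type u₁} {D : Type u₂}
variable [Category.{v₁} C] [Category.{v} D]
variable {G : D ⥤ C} {F : C ⥤ D} (adj : F ⊣ G)

variable [HasReflexiveCoequalizers D] [G.ReflectsIsomorphisms]

class PreservesColimitOfIsReflexivePair (G : C ⥤ D) where
  out : ∀ ⦃A B⦄ (f g : A ⟶ B) [IsReflexivePair f g], PreservesColimit (parallelPair f g) G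

instance {A B} (f g : A ⟶ B) [IsReflexivePair f g] [PreservesColimitOfIsReflexivePair G] :
  PreservesColimit (parallelPair f g) G := PreservesColimitOfIsReflexivePair.out f g

instance [PreservesColimitOfIsReflexivePair G] : ∀ X : Algebra adj.toMonad,
    PreservesColimit (parallelPair (F.map X.a)
      (NatTrans.app adj.counit (F.obj X.A))) G :=
 fun _ => PreservesColimitOfIsReflexivePair.out _ _

variable [PreservesColimitOfIsReflexivePair G]

/-- Reflexive (crude) monadicity theorem. If `G` has a right adjoint, `D` has and `G` preserves
reflexive coequalizers and `G` reflects isomorphisms, then `G` is monadic.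
-/
def monadicOfHasPreservesReflexiveCoequalizersOfReflectsIsomorphisms : MonadicRightAdjoint G where
  L := F
  adj := adj
  eqv := by
    haveI : ∀ A : Algebra adj.toMonad, HasCoequalizer (F.map A.a) (adj.counit.app (F.obj A.A)) :=
      fun A => by haveI := main_pair_reflexive adj A; exact HasReflexiveCoequalizers.has_coeq _ _
    have : ∀ (X : Algebra adj.toMonad), IsIso ((comparisonAdjunction adj).unit.app X) := by
      intro X
      apply
        @isIso_of_reflects_iso _ _ _ _ _ _ _ (Monad.forget adj.toMonad) ?_ _
      · change IsIso ((comparisonAdjunction adj).unit.app X).f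
        rw [comparisonAdjunction_unit_f]
        exact (IsColimit.coconePointUniqueUpToIso (beckCoequalizer X)
          (unitColimitOfPreservesCoequalizer X)).isIso_hom
    have : ∀ (Y : D), IsIso ((comparisonAdjunction adj).counit.app Y) := by
      intro Y
      rw [comparisonAdjunction_counit_app]
      -- Porting note: passing instances through
      change IsIso (IsColimit.coconePointUniqueUpToIso _ ?_).hom
      infer_instance
      -- Porting note: passing instances through
      apply @counitCoequalizerOfReflectsCoequalizer _ _ _ _ _ _ _ _ ?_
      apply reflectsColimit_of_reflectsIsomorphisms
    exact (comparisonAdjunction adj).toEquivalence.isEquivalence_inverse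


end

end MyMonadicity

/-- Statement 4: if `L : A ⥤ 𝓛` is bijective on objects and `C` has coequalizers, then the
precomposition functor `L* : [𝓛, C] ⥤ [A, C]` is monadic iff it has a left adjoint. -/
theorem whiskeringLeft_monadic_iff_isRightAdjoint
    {A : Type u₁} [Category.{v₁} A] {𝓛 : Type u₂} [Category.{v₂} 𝓛]
    {C : Type u₃} [Category.{v₃} C] [HasCoequalizers C]
    (L : A ⥤ 𝓛) (hL : Function.Bijective L.obj) :
    Nonempty (MonadicRightAdjoint ((Functor.whiskeringLeft A 𝓛 C).obj L)) ↔
      ((Functor.whiskeringLeft A 𝓛 C).obj L).IsRightAdjoint := by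
  constructor
  · rintro ⟨h⟩
    exact ⟨⟨_, ⟨h.adj⟩⟩⟩
  · intro h
    have hrefl : ((Functor.whiskeringLeft A 𝓛 C).obj L).ReflectsIsomorphisms := by
      constructor
      intro F G α hα
      rw [NatTrans.isIso_iff_isIso_app] at hα ⊢
      intro ℓ
      obtain ⟨a, rfl⟩ := hL.2 ℓ
      exact hα a
    have hpres : MyMonadicity.PreservesColimitOfIsReflexivePair ((Functor.whiskeringLeft A 𝓛 C).obj L) :=
      by constructor; intro X Y f g _; infer_instance
    exact ⟨MyMonadicity.monadicOfHasPreservesReflexiveCoequalizersOfReflectsIsomorphisms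
      (Adjunction.ofIsRightAdjoint ((Functor.whiskeringLeft A 𝓛 C).obj L))⟩
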